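/- Every well-graded family with additionality 2 has VC-dimension exactly 2. -/

import Mathlib

/-- The one-inclusion graph of a set system. -/
def oneInclusion {α : Type*} [DecidableEq α] (F : Finset (Finset α)) :
    SimpleGraph {A : Finset α // A ∈ F} where
  Adj A B := (symmDiff A.1 B.1).card = 1
  symm := by
    constructor
    intro A B h
    rwa [symmDiff_comm] at h
  loopless := by
    constructor
    intro A h
    simp [symmDiff_self] at h

/-- A set system is well-graded if the Hamming distance between any two members
equals their distance in the one-inclusion graph. -/
def WellGraded {α : Type*} [DecidableEq α] (F : Finset (Finset α)) : Prop :=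
  ∀ A B : {A : Finset α // A ∈ F},
    (oneInclusion F).dist A B = (symmDiff A.1 B.1).card

/-- The set of essential elements of the domain. -/
def essSet {α : Type*} [DecidableEq α] [Fintype α] (F : Finset (Finset α)) :
    Finset α :=
  Finset.univ.filter (fun x => (∃ A ∈ F, x ∈ A) ∧ ∃ B ∈ F, x ∉ B)

/-- The VC-dimension of a finite set system. -/
def vcDim {α : Type*} [DecidableEq α] (F : Finset (Finset α)) : ℕ :=
  F.shatterer.sup Finset.card

section Aux

variable {α : Type*} [DecidableEq α]

private lemma sd_card_triangle (A B C : Finset α) :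
    (symmDiff A C).card ≤ (symmDiff A B).card + (symmDiff B C).card := by
  calc (symmDiff A C).card ≤ (symmDiff A B ∪ symmDiff B C).card :=
        Finset.card_le_card (by simpa using symmDiff_triangle A B C)
    _ ≤ _ := Finset.card_union_le _ _

private lemma walk_sd_le {F : Finset (Finset α)} {A B : {A : Finset α // A ∈ F}}
    (w : (oneInclusion F).Walk A B) : (symmDiff A.1 B.1).card ≤ w.length := by
  induction w with
  | nil => simp [symmDiff_self]
  | @cons u v x h p ih =>
    have := sd_card_triangle u.1 v.1 x.1
    have hadj : (symmDiff u.1 v.1).card = 1 := h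
    simp only [SimpleGraph.Walk.length_cons]
    omega

private lemma wg_reachable {F : Finset (Finset α)} (hWG : WellGraded F)
    (A B : {A : Finset α // A ∈ F}) : (oneInclusion F).Reachable A B := by
  by_contra h
  have h0 := SimpleGraph.dist_eq_zero_of_not_reachable h
  rw [hWG A B] at h0
  have : A.1 = B.1 := by
    have := Finset.card_eq_zero.mp h0
    have := (symmDiff_eq_bot (a := A.1) (b := B.1)).mp (by simpa using this)
    exact this
  exact h (by rw [Subtype.ext this])

private lemma walk_transfer {F F' : Finset (Finset α)} :
    ∀ {A B : {A : Finset α // A ∈ F}} (w : (oneInclusion F).Walk A B)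
      (_ : ∀ P ∈ w.support, P.1 ∈ F') (hA : A.1 ∈ F') (hB : B.1 ∈ F'),
      ∃ w' : (oneInclusion F').Walk ⟨A.1, hA⟩ ⟨B.1, hB⟩, w'.length = w.length := by
  intro A B w
  induction w with
  | nil => intro _ hA hB; exact ⟨SimpleGraph.Walk.nil, rfl⟩
  | @cons u v x h p ih =>
    intro hsupp hA hB
    have hv : v.1 ∈ F' := hsupp v (by simp)
    obtain ⟨w', hw'⟩ := ih (fun P hP => hsupp P (by simp [hP])) hv hB
    refine ⟨SimpleGraph.Walk.cons (show (oneInclusion F').Adj ⟨u.1, hA⟩ ⟨v.1, hv⟩ from h) w', ?_⟩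
    simp [hw']

private lemma geodesic_split {F : Finset (Finset α)} {A B : {A : Finset α // A ∈ F}}
    (w : (oneInclusion F).Walk A B) (hlen : w.length = (symmDiff A.1 B.1).card)
    {P : {A : Finset α // A ∈ F}} (hP : P ∈ w.support) :
    (symmDiff A.1 P.1).card + (symmDiff P.1 B.1).card = (symmDiff A.1 B.1).card := by
  obtain ⟨q, r, rfl⟩ := SimpleGraph.Walk.mem_support_iff_exists_append.mp hP
  have h1 := walk_sd_le q
  have h2 := walk_sd_le r
  have h3 := sd_card_triangle A.1 P.1 B.1
  have h4 : q.length + r.length = (symmDiff A.1 B.1).card := by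
    rw [← SimpleGraph.Walk.length_append]; exact hlen
  omega

private lemma crossing_count {A B P : Finset α} {z : α} (hAB : z ∈ A ↔ z ∈ B)
    (hP : ¬ (z ∈ P ↔ z ∈ A)) :
    (symmDiff A B).card < (symmDiff A P).card + (symmDiff P B).card := by
  have hsub : symmDiff A B ⊆ symmDiff A P ∪ symmDiff P B := by
    simpa using symmDiff_triangle A P B
  have hzU : z ∈ symmDiff A P ∪ symmDiff P B := by
    simp only [Finset.mem_union, Finset.mem_symmDiff]; tauto
  have hzAB : z ∉ symmDiff A B := by
    simp only [Finset.mem_symmDiff]; tauto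
  have hss : symmDiff A B ⊂ symmDiff A P ∪ symmDiff P B :=
    Finset.ssubset_iff_of_subset hsub |>.mpr ⟨z, hzU, hzAB⟩
  calc (symmDiff A B).card < (symmDiff A P ∪ symmDiff P B).card := Finset.card_lt_card hss
    _ ≤ _ := Finset.card_union_le _ _

private lemma wellGraded_closed {F F' : Finset (Finset α)} (hWG : WellGraded F)
    (hsub : F' ⊆ F)
    (hcl : ∀ A B P : Finset α, A ∈ F' → B ∈ F' → P ∈ F →
      (symmDiff A P).card + (symmDiff P B).card = (symmDiff A B).card → P ∈ F') :
    WellGraded F' := by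
  intro A B
  have hA : A.1 ∈ F := hsub A.2
  have hB : B.1 ∈ F := hsub B.2
  obtain ⟨w, hw⟩ :=
    (wg_reachable hWG ⟨A.1, hA⟩ ⟨B.1, hB⟩).exists_walk_length_eq_dist
  have hlen : w.length = (symmDiff A.1 B.1).card := by
    rw [hw]; exact hWG _ _
  have hsupp : ∀ P ∈ w.support, P.1 ∈ F' := fun P hP =>
    hcl _ _ _ A.2 B.2 P.2 (geodesic_split w hlen hP)
  obtain ⟨w', hw'⟩ := walk_transfer w hsupp A.2 B.2
  have hub : (oneInclusion F').dist A B ≤ (symmDiff A.1 B.1).card := by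
    have := SimpleGraph.dist_le w'
    rwa [hw', hlen] at this
  have hlb : (symmDiff A.1 B.1).card ≤ (oneInclusion F').dist A B := by
    obtain ⟨p, hp⟩ :=
      (SimpleGraph.Reachable.exists_walk_length_eq_dist ⟨w'⟩ :
        ∃ p : (oneInclusion F').Walk A B, p.length = (oneInclusion F').dist A B)
    have := walk_sd_le p
    rwa [hp] at this
  omega

private lemma wellGraded_filter_not {F : Finset (Finset α)} (hWG : WellGraded F) (z : α) :
    WellGraded (F.filter fun A => z ∉ A) := by
  apply wellGraded_closed hWG (Finset.filter_subset _ _)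
  intro A B P hA hB hP heq
  have hzA : z ∉ A := (Finset.mem_filter.mp hA).2
  have hzB : z ∉ B := (Finset.mem_filter.mp hB).2
  refine Finset.mem_filter.mpr ⟨hP, fun hzP => ?_⟩
  have := crossing_count (A := A) (B := B) (P := P) (z := z) (by tauto) (by tauto)
  omega

private lemma wellGraded_filter_mem {F : Finset (Finset α)} (hWG : WellGraded F) (z : α) :
    WellGraded (F.filter fun A => z ∈ A) := by
  apply wellGraded_closed hWG (Finset.filter_subset _ _)
  intro A B P hA hB hP heq
  have hzA : z ∈ A := (Finset.mem_filter.mp hA).2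
  have hzB : z ∈ B := (Finset.mem_filter.mp hB).2
  refine Finset.mem_filter.mpr ⟨hP, ?_⟩
  by_contra hzP
  have := crossing_count (A := A) (B := B) (P := P) (z := z) (by tauto) (by tauto)
  omega

private lemma exists_crossing_walk {F : Finset (Finset α)} {z : α}
    {A B : {A : Finset α // A ∈ F}} (w : (oneInclusion F).Walk A B)
    (hzA : z ∉ A.1) (hzB : z ∈ B.1) :
    ∃ P ∈ F, ∃ Q ∈ F, z ∉ P ∧ z ∈ Q ∧ symmDiff P Q = {z} := by
  induction w with
  | nil => exact absurd hzB hzA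
  | @cons u v x h p ih =>
    by_cases hzv : z ∈ v.1
    · refine ⟨u.1, u.2, v.1, v.2, hzA, hzv, ?_⟩
      have hcard : (symmDiff u.1 v.1).card = 1 := h
      obtain ⟨a, ha⟩ := Finset.card_eq_one.mp hcard
      have hz : z ∈ symmDiff u.1 v.1 := by
        simp only [Finset.mem_symmDiff]; tauto
      rw [ha] at hz ⊢
      rw [Finset.mem_singleton.mp hz]
    · exact ih hzv hzB

private lemma exists_crossing {F : Finset (Finset α)} (hWG : WellGraded F) {z : α}
    (h0 : ∃ A ∈ F, z ∉ A) (h1 : ∃ B ∈ F, z ∈ B) :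
    ∃ P ∈ F, ∃ Q ∈ F, z ∉ P ∧ z ∈ Q ∧ symmDiff P Q = {z} := by
  obtain ⟨A, hA, hzA⟩ := h0
  obtain ⟨B, hB, hzB⟩ := h1
  obtain ⟨w⟩ := wg_reachable hWG ⟨A, hA⟩ ⟨B, hB⟩
  exact exists_crossing_walk w hzA hzB

variable [Fintype α]

private lemma mem_essSet {F : Finset (Finset α)} {x : α} :
    x ∈ essSet F ↔ (∃ A ∈ F, x ∈ A) ∧ ∃ B ∈ F, x ∉ B := by
  simp [essSet]

private lemma essSet_mono {F F' : Finset (Finset α)} (h : F' ⊆ F) :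
    essSet F' ⊆ essSet F := by
  intro x hx
  rw [mem_essSet] at hx ⊢
  obtain ⟨⟨A, hA, hxA⟩, ⟨B, hB, hxB⟩⟩ := hx
  exact ⟨⟨A, h hA, hxA⟩, ⟨B, h hB, hxB⟩⟩

private lemma z_not_mem_ess_not {F : Finset (Finset α)} (z : α) :
    z ∉ essSet (F.filter fun A => z ∉ A) := by
  rw [mem_essSet]
  rintro ⟨⟨A, hA, hzA⟩, -⟩
  exact (Finset.mem_filter.mp hA).2 hzA

private lemma z_not_mem_ess_mem {F : Finset (Finset α)} (z : α) :
    z ∉ essSet (F.filter fun A => z ∈ A) := by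
  rw [mem_essSet]
  rintro ⟨-, ⟨B, hB, hzB⟩⟩
  exact hzB (Finset.mem_filter.mp hB).2

private lemma card_le_one_of_ess_empty {F : Finset (Finset α)} (h : essSet F = ∅) :
    F.card ≤ 1 := by
  rw [Finset.card_le_one]
  intro A hA B hB
  by_contra hne
  have : (symmDiff A B).Nonempty := by
    rw [Finset.nonempty_iff_ne_empty]
    intro hemp
    exact hne (symmDiff_eq_bot.mp (by simpa using hemp))
  obtain ⟨x, hx⟩ := this
  rw [Finset.mem_symmDiff] at hx
  have hxe : x ∈ essSet F := by
    rw [mem_essSet]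
    rcases hx with ⟨h1, h2⟩ | ⟨h1, h2⟩
    · exact ⟨⟨A, hA, h1⟩, ⟨B, hB, h2⟩⟩
    · exact ⟨⟨B, hB, h1⟩, ⟨A, hA, h2⟩⟩
  rw [h] at hxe
  exact absurd hxe (Finset.notMem_empty x)

private lemma shatters_of_ess_both {F : Finset (Finset α)} {x z : α}
    (hx0 : x ∈ essSet (F.filter fun A => z ∉ A))
    (hx1 : x ∈ essSet (F.filter fun A => z ∈ A)) :
    F.Shatters ({x, z} : Finset α) ∧ ({x, z} : Finset α).card = 2 := by
  rw [mem_essSet] at hx0 hx1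
  obtain ⟨⟨A, hA, hxA⟩, ⟨B, hB, hxB⟩⟩ := hx0
  obtain ⟨⟨C, hC, hxC⟩, ⟨D, hD, hxD⟩⟩ := hx1
  rw [Finset.mem_filter] at hA hB hC hD
  have hxz : x ≠ z := by
    rintro rfl
    exact hA.2 hxA
  constructor
  · intro T hT
    by_cases hxT : x ∈ T <;> by_cases hzT : z ∈ T
    · refine ⟨C, hC.1, ?_⟩
      have hTeq : T = {x, z} := by
        apply Finset.Subset.antisymm hT
        rw [Finset.insert_subset_iff, Finset.singleton_subset_iff]
        exact ⟨hxT, hzT⟩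
      rw [hTeq, Finset.inter_eq_left]
      rw [Finset.insert_subset_iff, Finset.singleton_subset_iff]
      exact ⟨hxC, hC.2⟩
    · refine ⟨A, hA.1, ?_⟩
      ext a
      simp only [Finset.mem_inter, Finset.mem_insert, Finset.mem_singleton]
      constructor
      · rintro ⟨rfl | rfl, haA⟩
        · exact hxT
        · exact absurd haA hA.2
      · intro haT
        rcases Finset.mem_insert.mp (hT haT) with rfl | h
        · exact ⟨Or.inl rfl, hxA⟩
        · rw [Finset.mem_singleton] at h
          subst h; exact absurd haT hzT
    · refine ⟨D, hD.1, ?_⟩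
      ext a
      simp only [Finset.mem_inter, Finset.mem_insert, Finset.mem_singleton]
      constructor
      · rintro ⟨rfl | rfl, haD⟩
        · exact absurd haD hxD
        · exact hzT
      · intro haT
        rcases Finset.mem_insert.mp (hT haT) with rfl | h
        · exact absurd haT hxT
        · rw [Finset.mem_singleton] at h
          subst h; exact ⟨Or.inr rfl, hD.2⟩
    · refine ⟨B, hB.1, ?_⟩
      ext a
      simp only [Finset.mem_inter, Finset.mem_insert, Finset.mem_singleton]
      constructor
      · rintro ⟨rfl | rfl, haB⟩
        · exact absurd haB hxB
        · exact absurd haB hB.2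
      · intro haT
        rcases Finset.mem_insert.mp (hT haT) with rfl | h
        · exact absurd haT hxT
        · rw [Finset.mem_singleton] at h
          subst h; exact absurd haT hzT
  · rw [Finset.card_insert_of_notMem (by simpa using hxz), Finset.card_singleton]

private lemma ess_split_subset {F : Finset (Finset α)} (hWG : WellGraded F) {z : α}
    (hz : z ∈ essSet F) :
    essSet F ⊆ essSet (F.filter fun A => z ∉ A) ∪ essSet (F.filter fun A => z ∈ A) ∪ {z} := by
  intro x hx
  rw [Finset.mem_union, Finset.mem_union, Finset.mem_singleton]
  by_cases hxz : x = z
  · exact Or.inr hxz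
  by_contra hcon
  push_neg at hcon
  obtain ⟨⟨hx0, hx1⟩, -⟩ := hcon
  rw [mem_essSet] at hz
  obtain ⟨P, hP, Q, hQ, hzP, hzQ, hPQ⟩ := exists_crossing hWG hz.2 hz.1
  have hPQx : x ∈ P ↔ x ∈ Q := by
    have : x ∉ symmDiff P Q := by
      rw [hPQ, Finset.mem_singleton]; exact hxz
    rw [Finset.mem_symmDiff] at this
    tauto
  have hP0 : P ∈ F.filter fun A => z ∉ A := Finset.mem_filter.mpr ⟨hP, hzP⟩
  have hQ1 : Q ∈ F.filter fun A => z ∈ A := Finset.mem_filter.mpr ⟨hQ, hzQ⟩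
  have hconst0 : ∀ C ∈ F, z ∉ C → (x ∈ C ↔ x ∈ P) := by
    intro C hC hzC
    rw [mem_essSet] at hx0
    push_neg at hx0
    by_cases hxP : x ∈ P
    · simp only [hxP, iff_true]
      exact hx0 ⟨P, hP0, hxP⟩ C (Finset.mem_filter.mpr ⟨hC, hzC⟩)
    · simp only [hxP, iff_false]
      intro hxC
      exact hxP (hx0 ⟨C, Finset.mem_filter.mpr ⟨hC, hzC⟩, hxC⟩ P hP0)
  have hconst1 : ∀ C ∈ F, z ∈ C → (x ∈ C ↔ x ∈ Q) := by
    intro C hC hzC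
    rw [mem_essSet] at hx1
    push_neg at hx1
    by_cases hxQ : x ∈ Q
    · simp only [hxQ, iff_true]
      exact hx1 ⟨Q, hQ1, hxQ⟩ C (Finset.mem_filter.mpr ⟨hC, hzC⟩)
    · simp only [hxQ, iff_false]
      intro hxC
      exact hxQ (hx1 ⟨C, Finset.mem_filter.mpr ⟨hC, hzC⟩, hxC⟩ Q hQ1)
  rw [mem_essSet] at hx
  obtain ⟨⟨A, hA, hxA⟩, ⟨B, hB, hxB⟩⟩ := hx
  have hxP : x ∈ P := by
    by_cases hzA : z ∈ A
    · exact hPQx.mpr ((hconst1 A hA hzA).mp hxA)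
    · exact (hconst0 A hA hzA).mp hxA
  have hxP' : x ∉ P := by
    by_cases hzB : z ∈ B
    · intro hxP
      exact hxB ((hconst1 B hB hzB).mpr (hPQx.mp hxP))
    · intro hxP
      exact hxB ((hconst0 B hB hzB).mpr hxP)
  exact hxP' hxP

private lemma shatters_filter_not {F : Finset (Finset α)} {S : Finset α} {z : α}
    (h : F.Shatters S) (hzS : z ∈ S) :
    (F.filter fun A => z ∉ A).Shatters (S.erase z) := by
  intro T hT
  have hTS : T ⊆ S := hT.trans (Finset.erase_subset _ _)
  obtain ⟨A, hA, hSA⟩ := h hTS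
  have hzT : z ∉ T := fun hzT => Finset.notMem_erase z S (hT hzT)
  have hzA : z ∉ A := by
    intro hzA
    exact hzT (hSA ▸ Finset.mem_inter.mpr ⟨hzS, hzA⟩)
  refine ⟨A, Finset.mem_filter.mpr ⟨hA, hzA⟩, ?_⟩
  rw [Finset.erase_inter, hSA, Finset.erase_eq_of_notMem hzT]

private lemma shatters_filter_mem {F : Finset (Finset α)} {S : Finset α} {z : α}
    (h : F.Shatters S) (hzS : z ∈ S) :
    (F.filter fun A => z ∈ A).Shatters (S.erase z) := by
  intro T hT
  have hzT : z ∉ T := fun hzT => Finset.notMem_erase z S (hT hzT)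
  have hsub : insert z T ⊆ S :=
    Finset.insert_subset hzS (hT.trans (Finset.erase_subset _ _))
  obtain ⟨A, hA, hSA⟩ := h hsub
  have hzA : z ∈ A := by
    have : z ∈ S ∩ A := hSA ▸ Finset.mem_insert_self z T
    exact (Finset.mem_inter.mp this).2
  refine ⟨A, Finset.mem_filter.mpr ⟨hA, hzA⟩, ?_⟩
  rw [Finset.erase_inter, hSA, Finset.erase_insert hzT]

private lemma ess_subset_of_shatters {F : Finset (Finset α)} {S : Finset α}
    (h : F.Shatters S) : S ⊆ essSet F := by
  intro x hx
  obtain ⟨A, hA, hSA⟩ := h (Finset.singleton_subset_iff.mpr hx)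
  obtain ⟨B, hB, hSB⟩ := h (Finset.empty_subset S)
  rw [mem_essSet]
  refine ⟨⟨A, hA, ?_⟩, ⟨B, hB, ?_⟩⟩
  · have : x ∈ S ∩ A := hSA ▸ Finset.mem_singleton_self x
    exact (Finset.mem_inter.mp this).2
  · intro hxB
    have : x ∈ S ∩ B := Finset.mem_inter.mpr ⟨hx, hxB⟩
    rw [hSB] at this
    exact Finset.notMem_empty x this

private lemma count_lemma :
    ∀ n (F : Finset (Finset α)), WellGraded F → F.card ≤ n →
      ∀ S : Finset α, F.Shatters S →
        (essSet F).card + 2 ^ S.card ≤ F.card + S.card := by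
  intro n
  induction n with
  | zero =>
    intro F _ hcard S hS
    obtain ⟨A, hA⟩ := hS.nonempty
    have := Finset.card_pos.mpr ⟨A, hA⟩
    omega
  | succ n ih =>
    intro F hWG hcard S hS
    have hne : F.Nonempty := hS.nonempty
    -- choose a split element z
    by_cases hS0 : S = ∅
    · subst hS0
      rcases Finset.eq_empty_or_nonempty (essSet F) with hess | ⟨z, hz⟩
      · simp only [hess, Finset.card_empty, Finset.card_pos.mpr hne]
        have := Finset.card_pos.mpr hne
        simpa using this
      · -- split by z
        rw [mem_essSet] at hz
        obtain ⟨⟨A, hA, hzA⟩, ⟨B, hB, hzB⟩⟩ := hz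
        set F₀ := F.filter fun A => z ∉ A with hF₀
        set F₁ := F.filter fun A => z ∈ A with hF₁
        have hne0 : F₀.Nonempty := ⟨B, Finset.mem_filter.mpr ⟨hB, hzB⟩⟩
        have hne1 : F₁.Nonempty := ⟨A, Finset.mem_filter.mpr ⟨hA, hzA⟩⟩
        have hsum : F₁.card + F₀.card = F.card :=
          Finset.card_filter_add_card_filter_not _
        have h0 := ih F₀ (wellGraded_filter_not hWG z)
          (by have := Finset.card_pos.mpr hne1; omega) ∅
          (Finset.shatters_empty.mpr hne0)
        have h1 := ih F₁ (wellGraded_filter_mem hWG z)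
          (by have := Finset.card_pos.mpr hne0; omega) ∅
          (Finset.shatters_empty.mpr hne1)
        have hz' : z ∈ essSet F := mem_essSet.mpr ⟨⟨A, hA, hzA⟩, ⟨B, hB, hzB⟩⟩
        have hesssub := ess_split_subset hWG hz'
        have hk : (essSet F).card ≤ (essSet F₀).card + (essSet F₁).card + 1 := by
          calc (essSet F).card ≤ (essSet F₀ ∪ essSet F₁ ∪ {z}).card :=
                Finset.card_le_card hesssub
            _ ≤ (essSet F₀ ∪ essSet F₁).card + 1 := by
                have := Finset.card_union_le (essSet F₀ ∪ essSet F₁) ({z} : Finset α)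
                simpa using this
            _ ≤ (essSet F₀).card + (essSet F₁).card + 1 := by
                have := Finset.card_union_le (essSet F₀) (essSet F₁)
                omega
        simp only [Finset.card_empty, pow_zero] at h0 h1 ⊢
        omega
    · obtain ⟨z, hzS⟩ := Finset.nonempty_iff_ne_empty.mpr hS0
      have hz' : z ∈ essSet F := ess_subset_of_shatters hS hzS
      rw [mem_essSet] at hz'
      obtain ⟨⟨A, hA, hzA⟩, ⟨B, hB, hzB⟩⟩ := hz'
      set F₀ := F.filter fun A => z ∉ A with hF₀
      set F₁ := F.filter fun A => z ∈ A with hF₁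
      set S' := S.erase z with hS'
      have hne0 : F₀.Nonempty := ⟨B, Finset.mem_filter.mpr ⟨hB, hzB⟩⟩
      have hne1 : F₁.Nonempty := ⟨A, Finset.mem_filter.mpr ⟨hA, hzA⟩⟩
      have hsum : F₁.card + F₀.card = F.card :=
        Finset.card_filter_add_card_filter_not _
      have hsh0 : F₀.Shatters S' := shatters_filter_not hS hzS
      have hsh1 : F₁.Shatters S' := shatters_filter_mem hS hzS
      have h0 := ih F₀ (wellGraded_filter_not hWG z)
        (by have := Finset.card_pos.mpr hne1; omega) S' hsh0
      have h1 := ih F₁ (wellGraded_filter_mem hWG z)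
        (by have := Finset.card_pos.mpr hne0; omega) S' hsh1
      have hz'' : z ∈ essSet F := ess_subset_of_shatters hS hzS
      have hesssub := ess_split_subset hWG hz''
      have hScard : S.card = S'.card + 1 := by
        rw [hS', Finset.card_erase_of_mem hzS]
        have := Finset.card_pos.mpr ⟨z, hzS⟩
        omega
      -- S' lies in both essential sets
      have hS'sub : S' ⊆ essSet F₀ ∩ essSet F₁ :=
        Finset.subset_inter (ess_subset_of_shatters hsh0) (ess_subset_of_shatters hsh1)
      have hinter : S'.card ≤ (essSet F₀ ∩ essSet F₁).card :=
        Finset.card_le_card hS'sub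
      have hie : (essSet F₀ ∪ essSet F₁).card + (essSet F₀ ∩ essSet F₁).card
          = (essSet F₀).card + (essSet F₁).card :=
        Finset.card_union_add_card_inter _ _
      have hk : (essSet F).card ≤ (essSet F₀ ∪ essSet F₁).card + 1 := by
        calc (essSet F).card ≤ (essSet F₀ ∪ essSet F₁ ∪ {z}).card :=
              Finset.card_le_card hesssub
          _ ≤ (essSet F₀ ∪ essSet F₁).card + 1 := by
              have := Finset.card_union_le (essSet F₀ ∪ essSet F₁) ({z} : Finset α)
              simpa using this
      have hpow : 2 ^ S.card = 2 * 2 ^ S'.card := by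
        rw [hScard, pow_succ, mul_comm]
      rw [hpow]
      omega

private lemma lb_lemma :
    ∀ n (F : Finset (Finset α)), WellGraded F → F.card ≤ n → F.Nonempty →
      (∀ S : Finset α, F.Shatters S → S.card ≤ 1) →
      F.card ≤ (essSet F).card + 1 := by
  intro n
  induction n with
  | zero =>
    intro F _ hcard hne _
    have := Finset.card_pos.mpr hne
    omega
  | succ n ih =>
    intro F hWG hcard hne hsmall
    rcases Finset.eq_empty_or_nonempty (essSet F) with hess | ⟨z, hz⟩
    · have := card_le_one_of_ess_empty hess
      omega
    · have hz' := hz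
      rw [mem_essSet] at hz'
      obtain ⟨⟨A, hA, hzA⟩, ⟨B, hB, hzB⟩⟩ := hz'
      set F₀ := F.filter fun A => z ∉ A with hF₀
      set F₁ := F.filter fun A => z ∈ A with hF₁
      have hne0 : F₀.Nonempty := ⟨B, Finset.mem_filter.mpr ⟨hB, hzB⟩⟩
      have hne1 : F₁.Nonempty := ⟨A, Finset.mem_filter.mpr ⟨hA, hzA⟩⟩
      have hsum : F₁.card + F₀.card = F.card :=
        Finset.card_filter_add_card_filter_not _
      have hsmall0 : ∀ S : Finset α, F₀.Shatters S → S.card ≤ 1 :=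
        fun S hS => hsmall S (hS.mono_left (Finset.filter_subset _ _))
      have hsmall1 : ∀ S : Finset α, F₁.Shatters S → S.card ≤ 1 :=
        fun S hS => hsmall S (hS.mono_left (Finset.filter_subset _ _))
      have h0 := ih F₀ (wellGraded_filter_not hWG z)
        (by have := Finset.card_pos.mpr hne1; omega) hne0 hsmall0
      have h1 := ih F₁ (wellGraded_filter_mem hWG z)
        (by have := Finset.card_pos.mpr hne0; omega) hne1 hsmall1
      -- disjointness of the two essential sets
      have hdisj : Disjoint (essSet F₀) (essSet F₁) := by
        rw [Finset.disjoint_left]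
        intro x hx0 hx1
        obtain ⟨hsh, hcard2⟩ := shatters_of_ess_both hx0 hx1
        have := hsmall _ hsh
        omega
      have hsub : essSet F₀ ∪ essSet F₁ ⊆ (essSet F).erase z := by
        apply Finset.union_subset
        · intro x hx
          exact Finset.mem_erase.mpr
            ⟨fun h => z_not_mem_ess_not z (h ▸ hx),
             essSet_mono (Finset.filter_subset _ _) hx⟩
        · intro x hx
          exact Finset.mem_erase.mpr
            ⟨fun h => z_not_mem_ess_mem z (h ▸ hx),
             essSet_mono (Finset.filter_subset _ _) hx⟩
      have hcard01 : (essSet F₀).card + (essSet F₁).card ≤ (essSet F).card - 1 := by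
        calc (essSet F₀).card + (essSet F₁).card
            = (essSet F₀ ∪ essSet F₁).card := (Finset.card_union_of_disjoint hdisj).symm
          _ ≤ ((essSet F).erase z).card := Finset.card_le_card hsub
          _ = (essSet F).card - 1 := Finset.card_erase_of_mem hz
      have hkpos : 1 ≤ (essSet F).card := Finset.card_pos.mpr ⟨z, hz⟩
      omega

private lemma two_pow_gt (s : ℕ) (h : 3 ≤ s) : s + 3 ≤ 2 ^ s := by
  induction s with
  | zero => omega
  | succ m ih =>
    rcases Nat.lt_or_ge m 3 with hm | hm
    · interval_cases m <;> simp_all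
    · have := ih (by omega)
      have : 2 ^ m ≤ 2 ^ (m + 1) := Nat.pow_le_pow_right (by norm_num) (by omega)
      have h2 : 2 ^ (m + 1) = 2 * 2 ^ m := by rw [pow_succ, mul_comm]
      omega

end Aux

/-- Every well-graded family with additionality `2` has VC-dimension exactly
`2`. -/
theorem vcDim_eq_two_of_additionality_two {α : Type*} [DecidableEq α]
    [Fintype α] (F : Finset (Finset α)) (hWG : WellGraded F)
    (hadd : F.card = (essSet F).card + 2) : vcDim F = 2 := by
  have hne : F.Nonempty := Finset.card_pos.mp (by omega)
  have hub : vcDim F ≤ 2 := by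
    apply Finset.sup_le
    intro S hS
    rw [Finset.mem_shatterer] at hS
    have := count_lemma F.card F hWG le_rfl S hS
    by_contra hcon
    push_neg at hcon
    have h3 : 3 ≤ S.card := hcon
    have := two_pow_gt S.card h3
    omega
  have hlb : 2 ≤ vcDim F := by
    by_contra hcon
    push_neg at hcon
    have hsmall : ∀ S : Finset α, F.Shatters S → S.card ≤ 1 := by
      intro S hS
      have : S.card ≤ vcDim F :=
        Finset.le_sup (Finset.mem_shatterer.mpr hS)
      omega
    have := lb_lemma F.card F hWG le_rfl hne hsmall
    omega
  omega
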